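/- Suppose 𝒵 is a Polish space, 𝔛c is a compact Polish space, and Φ_z : 𝔛c → 𝔛c, z ∈ 𝒵, are maps such that (x,z) ↦ Φ_z(x) is continuous on 𝔛c × 𝒵. Then S_{Φ_z} = ⋂_{n≥1} Φ_zⁿ(𝔛c) for every z ∈ 𝒵, and the set of points z ∈ 𝒵 at which the set-valued map z ↦ S_{Φ_z} ⊆ 𝔛c is hemi-continuous is residual. -/

import Mathlib

open Set Filter Topology

/-- Upper hemi-continuity of a set-valued map at a point. -/
def UpperHemiAt {V W : Type*} [TopologicalSpace V] [TopologicalSpace W]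
    (S : V → Set W) (v : V) : Prop :=
  ∀ W' : Set W, IsOpen W' → S v ⊆ W' →
    ∃ V₀ : Set V, IsOpen V₀ ∧ v ∈ V₀ ∧ ∀ v' ∈ V₀, S v' ⊆ W'

/-- Lower hemi-continuity of a set-valued map at a point. -/
def LowerHemiAt {V W : Type*} [TopologicalSpace V] [TopologicalSpace W]
    (S : V → Set W) (v : V) : Prop :=
  ∀ W₁ : Set W, IsOpen W₁ → (W₁ ∩ S v).Nonempty →
    ∃ V₀ : Set V, IsOpen V₀ ∧ v ∈ V₀ ∧ ∀ v' ∈ V₀, (W₁ ∩ S v').Nonempty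

/-- Hemi-continuity of a set-valued map at a point. -/
def HemiAt {V W : Type*} [TopologicalSpace V] [TopologicalSpace W]
    (S : V → Set W) (v : V) : Prop :=
  UpperHemiAt S v ∧ LowerHemiAt S v

/-- The set of points through which a (bi-infinite) solution of `Φ` passes. -/
def SolSet {𝔛 : Type*} (Φ : 𝔛 → 𝔛) : Set 𝔛 :=
  {x | ∃ χ : ℤ → 𝔛, χ 0 = x ∧ ∀ t : ℤ, χ (t + 1) = Φ (χ t)}

section Aux

variable {𝒵 𝔛c : Type*} [TopologicalSpace 𝒵] [TopologicalSpace 𝔛c]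

/-- Joint continuity of the `n`-th iterate. -/
lemma aux_cont_iter (Φ : 𝒵 → 𝔛c → 𝔛c)
    (hΦ : Continuous fun p : 𝔛c × 𝒵 => Φ p.2 p.1) (n : ℕ) :
    Continuous fun p : 𝔛c × 𝒵 => (Φ p.2)^[n] p.1 := by
  induction n with
  | zero => simpa using continuous_fst
  | succ n ih =>
    have h : (fun p : 𝔛c × 𝒵 => (Φ p.2)^[n + 1] p.1)
        = fun p : 𝔛c × 𝒵 => Φ p.2 ((Φ p.2)^[n] p.1) := by
      funext p; exact Function.iterate_succ_apply' _ _ _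
    rw [h]
    exact hΦ.comp (ih.prodMk continuous_snd)

/-- Any point with a bi-infinite solution lies in every forward image of the whole space. -/
lemma aux_solset_subset_image {Φ : 𝔛c → 𝔛c} (n : ℕ) :
    SolSet Φ ⊆ Φ^[n] '' Set.univ := by
  rintro x ⟨χ, hχ0, hχ⟩
  have key : ∀ m : ℕ, ∀ t : ℤ, χ (t + m) = Φ^[m] (χ t) := by
    intro m
    induction m with
    | zero => simp
    | succ m ih =>
      intro t
      have h : (t + ((m : ℤ) + 1)) = (t + m) + 1 := by ring
      push_cast
      rw [h, hχ, ih, ← Function.iterate_succ_apply' Φ m]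
  have h := key n (-(n : ℤ))
  rw [show (-(n : ℤ) + n) = 0 by ring, hχ0] at h
  exact ⟨χ (-(n : ℤ)), trivial, h.symm⟩

/-- Conversely, in a compact Hausdorff space, a point in every forward image of the
whole space admits a bi-infinite solution. -/
lemma aux_mem_solset [T2Space 𝔛c] [CompactSpace 𝔛c] {Φ : 𝔛c → 𝔛c}
    (hc : Continuous Φ) {x : 𝔛c} (hx : ∀ n : ℕ, x ∈ Φ^[n] '' Set.univ) :
    x ∈ SolSet Φ := by
  set C : ℕ → Set (ℤ → 𝔛c) := fun n =>
    {χ | χ 0 = x ∧ ∀ t : ℤ, -(n : ℤ) ≤ t → χ (t + 1) = Φ (χ t)} with hC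
  have hdec : ∀ n, C (n + 1) ⊆ C n := by
    rintro n χ ⟨h0, h⟩
    exact ⟨h0, fun t ht => h t (by omega)⟩
  have hne : ∀ n, (C n).Nonempty := by
    intro n
    obtain ⟨y, -, hy⟩ := hx n
    refine ⟨fun t => if -(n : ℤ) ≤ t then Φ^[(t + n).toNat] y else y, ?_, ?_⟩
    · show (if -(n : ℤ) ≤ 0 then Φ^[((0 : ℤ) + n).toNat] y else y) = x
      rw [if_pos (by omega)]
      simpa using hy
    · intro t ht
      show (if -(n : ℤ) ≤ t + 1 then Φ^[(t + 1 + n).toNat] y else y)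
          = Φ (if -(n : ℤ) ≤ t then Φ^[(t + n).toNat] y else y)
      rw [if_pos (by omega), if_pos ht]
      have h1 : (t + 1 + n).toNat = (t + n).toNat + 1 := by omega
      rw [h1, Function.iterate_succ_apply']
  have hclosed : ∀ n, IsClosed (C n) := by
    intro n
    have h : C n = {χ : ℤ → 𝔛c | χ 0 = x} ∩
        ⋂ t : ℤ, ⋂ _ : -(n : ℤ) ≤ t, {χ : ℤ → 𝔛c | χ (t + 1) = Φ (χ t)} := by
      ext χ
      simp [hC, Set.mem_iInter]
    rw [h]
    exact (isClosed_eq (continuous_apply 0) continuous_const).inter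
      (isClosed_iInter fun t => isClosed_iInter fun _ =>
        isClosed_eq (continuous_apply _) (hc.comp (continuous_apply _)))
  obtain ⟨χ, hχ⟩ := IsCompact.nonempty_iInter_of_sequence_nonempty_isCompact_isClosed
    C hdec hne ((hclosed 0).isCompact) hclosed
  simp only [Set.mem_iInter] at hχ
  refine ⟨χ, (hχ 0).1, fun t => ?_⟩
  exact (hχ t.natAbs).2 t (by omega)

lemma aux_solset_eq [T2Space 𝔛c] [CompactSpace 𝔛c] {Φ : 𝔛c → 𝔛c} (hc : Continuous Φ) :
    SolSet Φ = ⋂ n ∈ {n : ℕ | 1 ≤ n}, Φ^[n] '' Set.univ := by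
  apply Set.Subset.antisymm
  · exact Set.subset_iInter₂ fun n _ => aux_solset_subset_image n
  · intro x hx
    rw [Set.mem_iInter₂] at hx
    apply aux_mem_solset hc
    intro n
    match n with
    | 0 => exact ⟨x, trivial, rfl⟩
    | n + 1 => exact hx (n + 1) (by simp)

/-- Upper hemi-continuity holds at every point. -/
lemma aux_upper [T2Space 𝔛c] [CompactSpace 𝔛c]
    (Φ : 𝒵 → 𝔛c → 𝔛c) (hΦ : Continuous fun p : 𝔛c × 𝒵 => Φ p.2 p.1)
    (z : 𝒵) : UpperHemiAt (fun z' => SolSet (Φ z')) z := by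
  have hcz : ∀ z', Continuous (Φ z') := fun z' =>
    hΦ.comp (continuous_id.prodMk continuous_const)
  intro W' hW' hSW
  -- find n with (Φ z)^[n] '' univ ⊆ W'
  have hKn : ∃ n : ℕ, (Φ z)^[n] '' Set.univ ⊆ W' := by
    by_contra h
    push_neg at h
    set Z : ℕ → Set 𝔛c := fun n => ((Φ z)^[n] '' Set.univ) ∩ W'ᶜ with hZ
    have hZc : ∀ n, IsClosed (Z n) :=
      fun n => ((isCompact_univ.image ((hcz z).iterate n)).isClosed).inter hW'.isClosed_compl
    have hZdec : ∀ n, Z (n + 1) ⊆ Z n := by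
      intro n
      apply Set.inter_subset_inter_left
      rw [Function.iterate_succ, Set.image_comp]
      exact Set.image_mono (Set.subset_univ _)
    have hZne : ∀ n, (Z n).Nonempty := by
      intro n
      obtain ⟨y, hy1, hy2⟩ := Set.not_subset.mp (h n)
      exact ⟨y, hy1, hy2⟩
    obtain ⟨y, hy⟩ := IsCompact.nonempty_iInter_of_sequence_nonempty_isCompact_isClosed
      Z hZdec hZne ((hZc 0).isCompact) hZc
    simp only [Set.mem_iInter] at hy
    have hyS : y ∈ SolSet (Φ z) := aux_mem_solset (hcz z) (fun n => (hy n).1)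
    exact (hy 0).2 (hSW hyS)
  obtain ⟨n, hn⟩ := hKn
  set N : Set (𝔛c × 𝒵) := {p | (Φ p.2)^[n] p.1 ∈ W'} with hN
  have hNopen : IsOpen N := hW'.preimage (aux_cont_iter Φ hΦ n)
  have hsub : Set.univ ×ˢ ({z} : Set 𝒵) ⊆ N := by
    rintro ⟨x, z'⟩ ⟨-, hz'⟩
    simp only [Set.mem_singleton_iff] at hz'
    subst hz'
    exact hn ⟨x, trivial, rfl⟩
  obtain ⟨U, V, hU, hV, hUuniv, hVz, hUV⟩ :=
    generalized_tube_lemma isCompact_univ isCompact_singleton hNopen hsub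
  refine ⟨V, hV, hVz rfl, ?_⟩
  intro z' hz' y hy
  obtain ⟨w, -, hw⟩ := aux_solset_subset_image n hy
  have hwN : (w, z') ∈ N := hUV ⟨hUuniv trivial, hz'⟩
  have hwN' : (Φ z')^[n] w ∈ W' := hwN
  rw [hw] at hwN'
  exact hwN'

/-- The set of parameters whose solution set hits a fixed closed set is closed. -/
lemma aux_hits_closed [T2Space 𝔛c] [CompactSpace 𝔛c]
    (Φ : 𝒵 → 𝔛c → 𝔛c) (hΦ : Continuous fun p : 𝔛c × 𝒵 => Φ p.2 p.1)
    {C : Set 𝔛c} (hC : IsClosed C) :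
    IsClosed {z | (C ∩ SolSet (Φ z)).Nonempty} := by
  rw [← isOpen_compl_iff, isOpen_iff_forall_mem_open]
  intro z hz
  have hsub : SolSet (Φ z) ⊆ Cᶜ := by
    intro y hy
    by_contra h
    simp only [Set.mem_compl_iff, not_not] at h
    exact hz ⟨y, h, hy⟩
  obtain ⟨V₀, hVo, hVz, hV⟩ := aux_upper Φ hΦ z Cᶜ hC.isOpen_compl hsub
  refine ⟨V₀, ?_, hVo, hVz⟩
  rintro z' hz' ⟨y, hyC, hyS⟩
  exact hV z' hz' hyS hyC

end Aux

theorem stmt8 {𝒵 𝔛c : Type*} [TopologicalSpace 𝒵] [PolishSpace 𝒵]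
    [TopologicalSpace 𝔛c] [PolishSpace 𝔛c] [CompactSpace 𝔛c]
    (Φ : 𝒵 → 𝔛c → 𝔛c)
    (hΦ : Continuous fun p : 𝔛c × 𝒵 => Φ p.2 p.1) :
    -- S_{Φ_z} = ⋂_{n ≥ 1} Φ_zⁿ(𝔛c) for every z
    (∀ z : 𝒵, SolSet (Φ z) = ⋂ n ∈ {n : ℕ | 1 ≤ n}, (Φ z)^[n] '' Set.univ) ∧
    -- the set of points where z ↦ S_{Φ_z} is hemi-continuous is residual
    {z : 𝒵 | HemiAt (fun z' : 𝒵 => SolSet (Φ z')) z} ∈ residual 𝒵 := by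
  letI := TopologicalSpace.upgradeIsCompletelyMetrizable 𝔛c
  have hcz : ∀ z, Continuous (Φ z) := fun z =>
    hΦ.comp (continuous_id.prodMk continuous_const)
  refine ⟨fun z => aux_solset_eq (hcz z), ?_⟩
  -- countable basis of 𝔛c
  obtain ⟨b, hbc, -, hbasis⟩ := TopologicalSpace.exists_countable_basis 𝔛c
  -- for each basis element, the set of parameters whose solution set meets its closure
  set M : Set 𝔛c → Set 𝒵 := fun U => {z | (closure U ∩ SolSet (Φ z)).Nonempty} with hM
  have hMclosed : ∀ U, IsClosed (M U) := fun U => aux_hits_closed Φ hΦ isClosed_closure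
  set D : Set 𝔛c → Set 𝒵 := fun U => M U \ interior (M U) with hD
  have hDres : ∀ U, (D U)ᶜ ∈ residual 𝒵 := by
    intro U
    have hDclosed : IsClosed (D U) := (hMclosed U).sdiff isOpen_interior
    have hDint : interior (D U) = ∅ := by
      rw [Set.eq_empty_iff_forall_notMem]
      intro z hzD
      have h1 : z ∈ interior (M U) :=
        interior_mono Set.diff_subset hzD
      exact (interior_subset hzD).2 h1
    exact residual_of_dense_open hDclosed.isOpen_compl
      (interior_eq_empty_iff_dense_compl.mp hDint)
  have hG : (⋂ U ∈ b, (D U)ᶜ) ∈ residual 𝒵 :=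
    (countable_bInter_mem hbc).mpr fun U _ => hDres U
  refine Filter.mem_of_superset hG ?_
  intro z hz
  simp only [Set.mem_iInter] at hz
  refine ⟨aux_upper Φ hΦ z, ?_⟩
  rintro W₁ hW₁ ⟨y, hyW, hyS⟩
  obtain ⟨t, ht_mem, htc, hts⟩ := exists_mem_nhds_isClosed_subset (hW₁.mem_nhds hyW)
  obtain ⟨U, hUb, hyU, hUt⟩ := hbasis.exists_subset_of_mem_open
    (mem_interior_iff_mem_nhds.mpr ht_mem) isOpen_interior
  have hclU : closure U ⊆ W₁ :=
    (closure_mono hUt).trans ((closure_minimal interior_subset htc).trans hts)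
  have hzM : z ∈ M U := ⟨y, subset_closure hyU, hyS⟩
  have hzint : z ∈ interior (M U) := by
    by_contra h
    exact hz U hUb ⟨hzM, h⟩
  refine ⟨interior (M U), isOpen_interior, hzint, ?_⟩
  intro z' hz'
  obtain ⟨y', hy'c, hy'S⟩ := interior_subset hz'
  exact ⟨y', hclU hy'c, hy'S⟩
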